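/- Let 0 < r₁ ≤ r₂ < 1, let Γ be a finite index set and for each j ∈ Γ let N_j ∈ ℕ₊. Then max over probability vectors p = (p_i) on Σ := ⨆_{j∈Γ} {1,…,N_j} of the quantity D(p) := (∑_i p_i log p_i)/log r₁ + (∑_j q_j log q_j)·(1/log r₂ − 1/log r₁), where q_j := ∑_{i in block j} p_i, equals log(∑_{j∈Γ} N_j^{log r₂ / log r₁}) / (−log r₂). -/

import Mathlib

open Real Finset

lemma gibbs {α : Type*} [Fintype α] (w a : α → ℝ) (hw : ∀ i, 0 ≤ w i) (ha : ∀ i, 0 < a i)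
    (hA : 0 < ∑ i, a i) :
    ∑ i, w i * Real.log (a i) - ∑ i, w i * Real.log (w i) ≤
      (∑ i, w i) * Real.log (∑ i, a i) - (∑ i, w i) * Real.log (∑ i, w i) := by
  set A := ∑ i, a i with hAdef
  set W := ∑ i, w i with hWdef
  rcases eq_or_lt_of_le (Finset.sum_nonneg fun i _ => hw i) with hW0 | hW0
  · have : ∀ i, w i = 0 := by
      intro i
      have := (Finset.sum_eq_zero_iff_of_nonneg (fun i _ => hw i)).mp hW0.symm
      exact this i (Finset.mem_univ i)
    have hW : W = 0 := hW0.symm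
    simp [this, hW]
  · have key : ∀ i, w i * Real.log (a i) - w i * Real.log (w i)
        - w i * Real.log A + w i * Real.log W ≤ W * a i / A - w i := by
      intro i
      rcases eq_or_lt_of_le (hw i) with h0 | h0
      · rw [← h0]
        have : 0 ≤ W * a i / A := div_nonneg (mul_nonneg hW0.le (ha i).le) hA.le
        simpa using this
      · have hpos : 0 < a i * W / (w i * A) := div_pos (mul_pos (ha i) hW0) (mul_pos h0 hA)
        have hlog := Real.log_le_sub_one_of_pos hpos
        have hrw : Real.log (a i * W / (w i * A)) =
            Real.log (a i) - Real.log (w i) - Real.log A + Real.log W := by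
          rw [Real.log_div (mul_pos (ha i) hW0).ne' (mul_pos h0 hA).ne',
            Real.log_mul (ne_of_gt (ha i)) (ne_of_gt hW0),
            Real.log_mul (ne_of_gt h0) (ne_of_gt hA)]
          ring
        rw [hrw] at hlog
        have := mul_le_mul_of_nonneg_left hlog (le_of_lt h0)
        calc w i * Real.log (a i) - w i * Real.log (w i) - w i * Real.log A + w i * Real.log W
            = w i * (Real.log (a i) - Real.log (w i) - Real.log A + Real.log W) := by ring
          _ ≤ w i * (a i * W / (w i * A) - 1) := this
          _ = W * a i / A - w i := by field_simp
    have lhs : ∑ i, (w i * Real.log (a i) - w i * Real.log (w i)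
        - w i * Real.log A + w i * Real.log W)
        = (∑ i, w i * Real.log (a i)) - (∑ i, w i * Real.log (w i))
          - W * Real.log A + W * Real.log W := by
      simp [Finset.sum_sub_distrib, Finset.sum_add_distrib, ← Finset.sum_mul, ← hWdef]
    have rhs : ∑ i, (W * a i / A - w i) = 0 := by
      rw [Finset.sum_sub_distrib]
      have : ∑ i, W * a i / A = W := by
        rw [← Finset.sum_div, ← Finset.mul_sum, ← hAdef, mul_div_assoc, div_self (ne_of_gt hA), mul_one]
      rw [this]; simp [hWdef]
    have hsum : ∑ i, (w i * Real.log (a i) - w i * Real.log (w i)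
        - w i * Real.log A + w i * Real.log W) ≤ ∑ i, (W * a i / A - w i) :=
      Finset.sum_le_sum (fun i _ => key i)
    rw [lhs, rhs] at hsum
    linarith

lemma sigma_sum {ι : Type*} [Fintype ι] (N : ι → ℕ) (f : ((j : ι) × Fin (N j)) → ℝ) :
    ∑ i, f i = ∑ j : ι, ∑ i : Fin (N j), f ⟨j, i⟩ := by
  rw [← Finset.univ_sigma_univ, Finset.sum_sigma]

theorem stmt10 {ι : Type*} [Fintype ι] [Nonempty ι] (N : ι → ℕ) (hN : ∀ j, 0 < N j)
    (r₁ r₂ : ℝ) (h1 : 0 < r₁) (h12 : r₁ ≤ r₂) (h2 : r₂ < 1) :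
    IsGreatest
      {d : ℝ | ∃ p : ((j : ι) × Fin (N j)) → ℝ,
        (∀ i, 0 ≤ p i) ∧ (∑ i, p i = 1) ∧
        d = (∑ i, p i * Real.log (p i)) / Real.log r₁ +
            (∑ j : ι, (∑ i : Fin (N j), p ⟨j, i⟩) * Real.log (∑ i : Fin (N j), p ⟨j, i⟩)) *
              (1 / Real.log r₂ - 1 / Real.log r₁)}
      (Real.log (∑ j : ι, (N j : ℝ) ^ (Real.log r₂ / Real.log r₁)) / (-Real.log r₂)) := by
  have h2' : 0 < r₂ := lt_of_lt_of_le h1 h12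
  have hL1 : Real.log r₁ < 0 := Real.log_neg h1 (lt_of_le_of_lt h12 h2)
  have hL2 : Real.log r₂ < 0 := Real.log_neg h2' h2
  have hL12 : Real.log r₁ ≤ Real.log r₂ := Real.log_le_log h1 h12
  set L₁ := Real.log r₁
  set L₂ := Real.log r₂
  set γ := L₂ / L₁ with hγdef
  have hγ0 : 0 < γ := div_pos_of_neg_of_neg hL2 hL1
  have hγ1 : γ ≤ 1 := div_le_one_iff.mpr (Or.inr (Or.inr ⟨hL1, hL12⟩))
  have hNpos : ∀ j, (0:ℝ) < (N j : ℝ) := fun j => by exact_mod_cast hN j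
  set Z := ∑ j : ι, (N j : ℝ) ^ γ with hZdef
  have hZpos : 0 < Z :=
    Finset.sum_pos (fun j _ => Real.rpow_pos_of_pos (hNpos j) γ) Finset.univ_nonempty
  constructor
  · -- membership: the optimal p
    refine ⟨fun i => (N i.1 : ℝ) ^ (γ - 1) / Z, fun i => by positivity, ?_, ?_⟩
    · rw [sigma_sum]
      have : ∀ j : ι, ∑ _i : Fin (N j), (N j : ℝ) ^ (γ - 1) / Z = (N j : ℝ) ^ γ / Z := by
        intro j
        rw [Finset.sum_const, Finset.card_univ, Fintype.card_fin, nsmul_eq_mul,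
          ← mul_div_assoc]
        congr 1
        rw [show γ = 1 + (γ - 1) by ring, Real.rpow_add (hNpos j), Real.rpow_one]
        ring_nf
      simp_rw [this]
      rw [← Finset.sum_div, ← hZdef, div_self hZpos.ne']
    · -- value computation
      set S := ∑ j : ι, ((N j : ℝ) ^ γ / Z) * Real.log (N j) with hSdef
      have hq : ∀ j : ι, ∑ _i : Fin (N j), (N j : ℝ) ^ (γ - 1) / Z = (N j : ℝ) ^ γ / Z := by
        intro j
        rw [Finset.sum_const, Finset.card_univ, Fintype.card_fin, nsmul_eq_mul,
          ← mul_div_assoc]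
        congr 1
        rw [show γ = 1 + (γ - 1) by ring, Real.rpow_add (hNpos j), Real.rpow_one]
        ring_nf
      have hlogp : ∀ j : ι, Real.log ((N j : ℝ) ^ (γ - 1) / Z)
          = (γ - 1) * Real.log (N j) - Real.log Z := by
        intro j
        rw [Real.log_div (Real.rpow_pos_of_pos (hNpos j) _).ne' hZpos.ne',
          Real.log_rpow (hNpos j)]
      have hlogq : ∀ j : ι, Real.log ((N j : ℝ) ^ γ / Z)
          = γ * Real.log (N j) - Real.log Z := by
        intro j
        rw [Real.log_div (Real.rpow_pos_of_pos (hNpos j) _).ne' hZpos.ne',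
          Real.log_rpow (hNpos j)]
      have hA : (∑ i : (j : ι) × Fin (N j), ((N i.1 : ℝ) ^ (γ - 1) / Z) *
          Real.log ((N i.1 : ℝ) ^ (γ - 1) / Z)) = (γ - 1) * S - Real.log Z := by
        rw [sigma_sum]
        have : ∀ j : ι, ∑ _i : Fin (N j), ((N j : ℝ) ^ (γ - 1) / Z) *
            Real.log ((N j : ℝ) ^ (γ - 1) / Z)
            = ((N j : ℝ) ^ γ / Z) * ((γ - 1) * Real.log (N j) - Real.log Z) := by
          intro j
          rw [Finset.sum_const, Finset.card_univ, Fintype.card_fin, nsmul_eq_mul, hlogp j,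
            ← mul_assoc]
          congr 1
          rw [← mul_div_assoc]
          congr 1
          rw [show γ = 1 + (γ - 1) by ring, Real.rpow_add (hNpos j), Real.rpow_one]
          ring_nf
        simp_rw [this, mul_sub, Finset.sum_sub_distrib, ← Finset.sum_mul]
        rw [← Finset.sum_div, ← hZdef, div_self hZpos.ne', hSdef]
        rw [Finset.mul_sum]
        congr 1
        · exact Finset.sum_congr rfl (fun j _ => by ring)
        · rw [one_mul]
      have hB : (∑ j : ι, (∑ i : Fin (N j), (N j : ℝ) ^ (γ - 1) / Z) *
          Real.log (∑ i : Fin (N j), (N j : ℝ) ^ (γ - 1) / Z)) = γ * S - Real.log Z := by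
        simp_rw [hq]
        simp_rw [hlogq]
        simp_rw [mul_sub]
        rw [Finset.sum_sub_distrib, ← Finset.sum_mul, ← Finset.sum_div, ← hZdef,
          div_self hZpos.ne', hSdef, Finset.mul_sum]
        congr 1
        · exact Finset.sum_congr rfl (fun j _ => by ring)
        · rw [one_mul]
      rw [hA, hB, hγdef]
      field_simp [hL1.ne, hL2.ne]
      ring
  · -- upper bound
    rintro d ⟨p, hp0, hp1, rfl⟩
    set q : ι → ℝ := fun j => ∑ i : Fin (N j), p ⟨j, i⟩ with hqdef
    set A := ∑ i, p i * Real.log (p i) with hAdef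
    set B := ∑ j : ι, q j * Real.log (q j) with hBdef
    have hq0 : ∀ j, 0 ≤ q j := fun j => Finset.sum_nonneg fun i _ => hp0 _
    have hq1 : ∑ j, q j = 1 := by rw [hqdef, ← sigma_sum N p, hp1]
    set T := ∑ j : ι, q j * Real.log (N j) with hTdef
    -- Step b: B - A ≤ T
    have hb : B - A ≤ T := by
      have block : ∀ j : ι, q j * Real.log (q j) - (∑ i : Fin (N j), p ⟨j, i⟩ * Real.log (p ⟨j, i⟩))
          ≤ q j * Real.log (N j) := by
        intro j
        have := gibbs (fun i : Fin (N j) => p ⟨j, i⟩) (fun _ => (1:ℝ)) (fun i => hp0 _)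
          (fun _ => one_pos) (by simp [hNpos j])
        simp only [Real.log_one, mul_zero, Finset.sum_const_zero, Finset.sum_const,
          Finset.card_univ, Fintype.card_fin, nsmul_eq_mul, mul_one] at this
        have e : q j = ∑ x : Fin (N j), p ⟨j, x⟩ := rfl
        rw [e]
        linarith [this]
      have hsum := Finset.sum_le_sum (fun j (_ : j ∈ Finset.univ) => block j)
      rw [Finset.sum_sub_distrib] at hsum
      rw [hAdef, sigma_sum N (fun i => p i * Real.log (p i))]
      rw [hBdef, hTdef]
      linarith [hsum]
    -- Step c: γ * T - B ≤ log Z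
    have hc : γ * T - B ≤ Real.log Z := by
      have := gibbs q (fun j => (N j : ℝ) ^ γ) hq0
        (fun j => Real.rpow_pos_of_pos (hNpos j) γ) hZpos
      rw [hq1, one_mul, one_mul, Real.log_one] at this
      have hlog : ∀ j : ι, Real.log ((N j : ℝ) ^ γ) = γ * Real.log (N j) := fun j =>
        Real.log_rpow (hNpos j) γ
      simp_rw [hlog] at this
      have : (∑ j : ι, q j * (γ * Real.log (N j))) - B ≤ Real.log Z := by
        rw [← hZdef] at this
        simpa [hBdef] using this
      have heq : ∑ j : ι, q j * (γ * Real.log (N j)) = γ * T := by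
        rw [hTdef, Finset.mul_sum]
        exact Finset.sum_congr rfl (fun j _ => by ring)
      linarith [this, heq ▸ this]
    -- combine
    have hcomb : γ * (B - A) - B ≤ Real.log Z := by
      have := mul_le_mul_of_nonneg_left hb hγ0.le
      linarith
    rw [le_div_iff₀ (neg_pos.mpr hL2)]
    have hexp : (A / L₁ + B * (1 / L₂ - 1 / L₁)) * (-L₂) = γ * (B - A) - B := by
      rw [hγdef]
      field_simp [hL1.ne, hL2.ne]
      ring
    rw [hexp]
    exact hcomb
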